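/- Let n ≥ 2 be an integer, k an integer, and x₁, x₂ complex numbers with x₂ ≠ 0. If π(x₁, x₂) lies on the ray B_{2k−1}, then x₁ = x₂·e^{i(2k−1)π/n}, and the set {e^{2πij/n}·x₁ : 0 ≤ j < n} ∪ {e^{2πij/n}·x₂ : 0 ≤ j < n} equals {x₂·e^{iπm/n} : 0 ≤ m < 2n}, i.e., the 2n points form the vertex set of a regular 2n-gon centered at the origin. -/

import Mathlib

open Real

/-- The map `π : ℂ × ℂ → ℝ³`,
`π(x₁,x₂) = (|x₁|² − |x₂|², 2 Re(x₁ x̄₂), 2 Im(x₁ x̄₂))`. -/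
noncomputable def piMap (x : ℂ × ℂ) : Fin 3 → ℝ :=
  ![‖x.1‖ ^ 2 - ‖x.2‖ ^ 2,
    2 * (x.1 * (starRingEnd ℂ) x.2).re,
    2 * (x.1 * (starRingEnd ℂ) x.2).im]

/-- The ray `B_m = {(0, s·cos(mπ/n), s·sin(mπ/n)) : s > 0} ⊂ ℝ³`. -/
noncomputable def Bray (n : ℕ) (m : ℤ) : Set (Fin 3 → ℝ) :=
  {v | ∃ s : ℝ, 0 < s ∧ v = ![0, s * Real.cos (m * π / n), s * Real.sin (m * π / n)]}

set_option maxHeartbeats 1000000 in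
/-- If `π(x₁,x₂)` lies on the ray `B_{2k−1}`, then `x₁ = x₂·e^{i(2k−1)π/n}` and the
`2n` points `e^{2πij/n}x₁`, `e^{2πij/n}x₂` (for `0 ≤ j < n`) form the vertex set
`{x₂·e^{iπm/n} : 0 ≤ m < 2n}` of a regular `2n`-gon centered at the origin. -/
theorem piMap_mem_Bray_odd (n : ℕ) (hn : 2 ≤ n) (k : ℤ) (x₁ x₂ : ℂ) (hx₂ : x₂ ≠ 0)
    (h : piMap (x₁, x₂) ∈ Bray n (2 * k - 1)) :
    x₁ = x₂ * Complex.exp (((2 * k - 1 : ℤ) : ℂ) * (π : ℂ) * Complex.I / (n : ℂ)) ∧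
    ({z : ℂ | ∃ j : ℕ, j < n ∧ z = Complex.exp (2 * (π : ℂ) * Complex.I * (j : ℂ) / (n : ℂ)) * x₁} ∪
     {z : ℂ | ∃ j : ℕ, j < n ∧ z = Complex.exp (2 * (π : ℂ) * Complex.I * (j : ℂ) / (n : ℂ)) * x₂})
      = {z : ℂ | ∃ m : ℕ, m < 2 * n ∧ z = x₂ * Complex.exp ((π : ℂ) * Complex.I * (m : ℂ) / (n : ℂ))} := by
  obtain ⟨s, hs, hv⟩ := h
  simp only [piMap] at hv
  have hn0 : (n : ℝ) ≠ 0 := by positivity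
  have hnC : (n : ℂ) ≠ 0 := by exact_mod_cast Nat.cast_ne_zero.mpr (by omega)
  set θ : ℝ := (2*k-1) * π / n with hθ
  have h0 : ‖x₁‖ ^ 2 - ‖x₂‖ ^ 2 = 0 := by
    have := congrFun hv 0; simpa using this
  have h1 : 2 * (x₁ * (starRingEnd ℂ) x₂).re = s * Real.cos θ := by
    have := congrFun hv 1; simpa using this
  have h2 : 2 * (x₁ * (starRingEnd ℂ) x₂).im = s * Real.sin θ := by
    have := congrFun hv 2; simpa using this
  have habs : ‖x₁‖ = ‖x₂‖ := by
    nlinarith [norm_nonneg x₁, norm_nonneg x₂]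
  have hb : (0:ℝ) < ‖x₂‖ := by
    simpa [norm_pos_iff] using hx₂
  have hnormsq : (x₁ * (starRingEnd ℂ) x₂).re ^ 2 + (x₁ * (starRingEnd ℂ) x₂).im ^ 2
      = ‖x₂‖ ^ 2 * ‖x₂‖ ^ 2 := by
    have habs2 : ‖x₁ * (starRingEnd ℂ) x₂‖ = ‖x₂‖ * ‖x₂‖ := by
      rw [norm_mul, Complex.norm_conj, habs]
    have h' := Complex.sq_norm (x₁ * (starRingEnd ℂ) x₂)
    rw [habs2] at h'
    have h'' := Complex.normSq_apply (x₁ * (starRingEnd ℂ) x₂)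
    nlinarith [h', h'']
  have hcs : Real.cos θ ^ 2 + Real.sin θ ^ 2 = 1 := by
    rw [add_comm]; exact Real.sin_sq_add_cos_sq θ
  have e1 : (2 * (x₁ * (starRingEnd ℂ) x₂).re) ^ 2 = (s * Real.cos θ) ^ 2 := by rw [h1]
  have e2 : (2 * (x₁ * (starRingEnd ℂ) x₂).im) ^ 2 = (s * Real.sin θ) ^ 2 := by rw [h2]
  have hsum : (s * Real.cos θ) ^ 2 + (s * Real.sin θ) ^ 2 = s ^ 2 := by
    have : (s * Real.cos θ) ^ 2 + (s * Real.sin θ) ^ 2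
        = s ^ 2 * (Real.cos θ ^ 2 + Real.sin θ ^ 2) := by ring
    rw [this, hcs, mul_one]
  have hsq : s ^ 2 = 4 * (‖x₂‖ ^ 2 * ‖x₂‖ ^ 2) := by nlinarith [e1, e2, hsum, hnormsq]
  have hs2 : s = 2 * ‖x₂‖ ^ 2 := by nlinarith [hsq, hs, hb, sq_nonneg (s - 2 * ‖x₂‖ ^ 2)]
  have hre : (x₁ * (starRingEnd ℂ) x₂).re = ‖x₂‖ ^ 2 * Real.cos θ := by
    rw [hs2] at h1; linarith
  have him : (x₁ * (starRingEnd ℂ) x₂).im = ‖x₂‖ ^ 2 * Real.sin θ := by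
    rw [hs2] at h2; linarith
  have hmul : x₁ * (starRingEnd ℂ) x₂ = (‖x₂‖ ^ 2 : ℝ) * Complex.exp ((θ:ℂ) * Complex.I) := by
    rw [Complex.exp_mul_I, ← Complex.ofReal_cos, ← Complex.ofReal_sin,
      ← Complex.re_add_im (x₁ * (starRingEnd ℂ) x₂), hre, him]
    push_cast
    ring
  have hexpθ : Complex.exp (((2 * k - 1 : ℤ) : ℂ) * (π : ℂ) * Complex.I / (n : ℂ))
      = Complex.exp ((θ:ℂ) * Complex.I) := by
    congr 1
    rw [hθ]
    push_cast
    field_simp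
  have hx1 : x₁ = x₂ * Complex.exp (((2 * k - 1 : ℤ) : ℂ) * (π : ℂ) * Complex.I / (n : ℂ)) := by
    rw [hexpθ]
    have h4 : (starRingEnd ℂ) x₂ * x₂ = ((‖x₂‖ ^2 :ℝ):ℂ) := by
      rw [mul_comm, Complex.mul_conj, Complex.sq_norm]
    have h3 : x₁ * ((‖x₂‖ ^2 :ℝ):ℂ) = x₂ * Complex.exp ((θ:ℂ) * Complex.I) * ((‖x₂‖ ^2 :ℝ):ℂ) :=
      calc x₁ * ((‖x₂‖ ^2 :ℝ):ℂ) = x₁ * ((starRingEnd ℂ) x₂ * x₂) := by rw [h4]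
        _ = (x₁ * (starRingEnd ℂ) x₂) * x₂ := by ring
        _ = ((‖x₂‖ ^2 :ℝ):ℂ) * Complex.exp ((θ:ℂ) * Complex.I) * x₂ := by rw [hmul]
        _ = x₂ * Complex.exp ((θ:ℂ) * Complex.I) * ((‖x₂‖ ^2 :ℝ):ℂ) := by ring
    have h5 : ((‖x₂‖ ^2 :ℝ):ℂ) ≠ 0 := by
      simpa using pow_ne_zero 2 (norm_ne_zero_iff.mpr hx₂)
    exact mul_right_cancel₀ h5 h3
  refine ⟨hx1, ?_⟩
  have key : ∀ a b : ℤ, (2*(n:ℤ)) ∣ (a - b) →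
      Complex.exp (π * Complex.I * a / n) = Complex.exp (π * Complex.I * b / n) := by
    rintro a b ⟨t, ht⟩
    have ha : (a:ℂ) = b + 2*n*t := by
      have : a = b + 2*n*t := by linarith [ht]
      exact_mod_cast congrArg (fun z : ℤ => (z:ℂ)) this
    rw [show (π:ℂ) * Complex.I * a / n = π * Complex.I * b / n + t * (2*π*Complex.I) by
      rw [ha]; field_simp]
    rw [Complex.exp_add, Complex.exp_int_mul_two_pi_mul_I, mul_one]
  have hpt : ∀ j : ℕ, Complex.exp (2 * (π : ℂ) * Complex.I * (j : ℂ) / (n : ℂ)) * x₁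
      = x₂ * Complex.exp (π * Complex.I * ((2*(j:ℤ)+2*k-1 : ℤ):ℂ) / n) := by
    intro j
    rw [hx1, mul_left_comm, ← Complex.exp_add]
    congr 2
    push_cast
    field_simp
    ring
  have hpt2 : ∀ j : ℕ, Complex.exp (2 * (π : ℂ) * Complex.I * (j : ℂ) / (n : ℂ)) * x₂
      = x₂ * Complex.exp (π * Complex.I * ((2*(j:ℤ) : ℤ):ℂ) / n) := by
    intro j
    rw [mul_comm]; congr 2; push_cast; ring
  have h2n : (0:ℤ) < 2*(n:ℤ) := by positivity
  ext z
  simp only [Set.mem_union, Set.mem_setOf_eq]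
  constructor
  · rintro (⟨j, hj, rfl⟩ | ⟨j, hj, rfl⟩)
    · refine ⟨((2*(j:ℤ)+2*k-1) % (2*n)).toNat, ?_, ?_⟩
      · have := Int.emod_lt_of_pos (2*(j:ℤ)+2*k-1) h2n
        have := Int.emod_nonneg (2*(j:ℤ)+2*k-1) (by omega : (2*(n:ℤ)) ≠ 0)
        omega
      · rw [hpt j]
        congr 1
        have hnn : 0 ≤ (2*(j:ℤ)+2*k-1) % (2*(n:ℤ)) :=
          Int.emod_nonneg _ (by omega)
        have hcast : ((((2*(j:ℤ)+2*k-1) % (2*(n:ℤ))).toNat : ℕ) : ℂ)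
            = (((2*(j:ℤ)+2*k-1) % (2*(n:ℤ)) : ℤ) : ℂ) := by
          exact_mod_cast congrArg (fun z : ℤ => (z:ℂ)) (Int.toNat_of_nonneg hnn)
        rw [hcast]
        exact key _ _ (Int.ModEq.dvd (Int.emod_emod_of_dvd _ dvd_rfl))
    · refine ⟨2*j, by omega, ?_⟩
      rw [hpt2 j]
      congr 2
      try push_cast
      try ring
  · rintro ⟨m, hm, rfl⟩
    rcases Nat.even_or_odd m with ⟨j, hj⟩ | ⟨r, hr⟩
    · refine Or.inr ⟨j, by omega, ?_⟩
      rw [hpt2 j]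
      congr 2
      push_cast [hj]
      try ring
    · have hbnn : 0 ≤ ((r:ℤ) + 1 - k) % n := Int.emod_nonneg _ (by omega)
      have hblt : ((r:ℤ) + 1 - k) % n < n := Int.emod_lt_of_pos _ (by omega)
      refine Or.inl ⟨(((r:ℤ) + 1 - k) % n).toNat, by omega, ?_⟩
      rw [hpt (((r:ℤ) + 1 - k) % n).toNat]
      congr 1
      obtain ⟨t, ht⟩ : ((n:ℤ)) ∣ (((r:ℤ)+1-k) - ((r:ℤ) + 1 - k) % n) :=
        Int.ModEq.dvd (Int.emod_emod_of_dvd _ dvd_rfl)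
      refine key _ _ ⟨t, ?_⟩
      have hb' : (((((r:ℤ) + 1 - k) % n).toNat : ℕ) : ℤ) = ((r:ℤ) + 1 - k) % n :=
        Int.toNat_of_nonneg hbnn
      have hm' : (m:ℤ) = 2*(r:ℤ)+1 := by exact_mod_cast congrArg (fun z : ℕ => (z:ℤ)) hr
      rw [hb', hm']
      linarith [ht]
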